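/- Let Θ be the characteristics of the kinetic Kuramoto model with natural frequencies and coupling K > 0, with initial measure f₀ whose frequency marginal g has compact support. If ∫₀^∞ R(s)² ds < ∞ (boundedness of the entropy), then for every k ∈ ℕ, ∫ e^{iΘ(t,θ,ω)} ω^k df₀(θ,ω) → 0 as t → ∞. -/

import Mathlib

open MeasureTheory Filter Real

lemma norm_expI (x : ℝ) : ‖Complex.exp (Complex.I * (x:ℂ))‖ = 1 := by
  rw [Complex.norm_exp]
  simp [Complex.mul_re]

lemma expI_lip (x y : ℝ) :
    ‖Complex.exp (Complex.I * (x:ℂ)) - Complex.exp (Complex.I * (y:ℂ))‖ ≤ |x - y| := by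
  have hd : ∀ u : ℝ, HasDerivWithinAt (fun u : ℝ => Complex.exp (Complex.I * (u:ℂ)))
      (Complex.exp (Complex.I * (u:ℂ)) * Complex.I) Set.univ u := by
    intro u
    exact (((hasDerivAt_id u).ofReal_comp.const_mul Complex.I).cexp.congr_deriv
      (by simp [id])).hasDerivWithinAt
  have := Convex.norm_image_sub_le_of_norm_hasDerivWithin_le
    (f := fun u : ℝ => Complex.exp (Complex.I * (u:ℂ)))
    (f' := fun u : ℝ => Complex.exp (Complex.I * (u:ℂ)) * Complex.I)
    (fun u _ => hd u)
    (fun u _ => by rw [norm_mul, norm_expI, Complex.norm_I, one_mul])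
    convex_univ (Set.mem_univ y) (Set.mem_univ x)
  simpa [Real.norm_eq_abs, abs_sub_comm] using this


lemma barbalat {f g : ℝ → ℂ} {L a : ℝ} (hL : 0 ≤ L)
    (hd : ∀ t ∈ Set.Ici a, HasDerivAt f (g t) t)
    (hlip : ∀ t ∈ Set.Ici a, ∀ s ∈ Set.Ici a, ‖g t - g s‖ ≤ L * |t - s|)
    (hf : Tendsto f atTop (nhds 0)) : Tendsto g atTop (nhds 0) := by
  rw [tendsto_zero_iff_norm_tendsto_zero]
  rw [Metric.tendsto_atTop]
  intro ε hε
  set h : ℝ := min 1 (ε / (2 * (L + 1))) with hh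
  have hhpos : 0 < h := by
    apply lt_min one_pos
    positivity
  have hLh : L * h ≤ ε / 2 := by
    have h1 : h ≤ ε / (2 * (L + 1)) := min_le_right _ _
    calc L * h ≤ (L + 1) * (ε / (2 * (L + 1))) := by
          apply mul_le_mul (by linarith) h1 (le_of_lt hhpos) (by linarith)
      _ = ε / 2 := by field_simp
  -- taylor bound: for t ≥ a, ‖f (t+h) - f t - h • g t‖ ≤ L * h * h
  have taylor : ∀ t ∈ Set.Ici a, ‖f (t + h) - f t - (h : ℂ) * g t‖ ≤ L * h * h := by
    intro t ht
    have key := Convex.norm_image_sub_le_of_norm_hasDerivWithin_le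
      (f := fun s => f s - (s : ℂ) * g t)
      (f' := fun s => g s - g t)
      (fun s hs => by
        have h1 : HasDerivAt (fun s : ℝ => f s - (s : ℂ) * g t) (g s - g t) s := by
          have := (hd s (le_trans ht hs.1)).sub
            ((((hasDerivAt_id s).ofReal_comp).mul_const (g t)))
          simp at this
          convert this using 1 <;> rfl
        exact h1.hasDerivWithinAt)
      (C := L * h)
      (fun s hs => by
        calc ‖g s - g t‖ ≤ L * |s - t| := hlip s (le_trans ht hs.1) t ht
          _ ≤ L * h := by
            apply mul_le_mul_of_nonneg_left _ hL
            rw [abs_of_nonneg (by linarith [hs.1])]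
            linarith [hs.2])
      (convex_Icc t (t + h))
      (Set.left_mem_Icc.2 (by linarith))
      (Set.right_mem_Icc.2 (by linarith))
    have : ‖f (t + h) - (↑(t+h)) * g t - (f t - (t:ℂ) * g t)‖ ≤ L * h * ‖(t + h : ℝ) - t‖ := key
    have he : ‖(t + h : ℝ) - t‖ = h := by
      rw [Real.norm_eq_abs, add_sub_cancel_left, abs_of_pos hhpos]
    rw [he] at this
    have heq : f (t + h) - (↑(t+h)) * g t - (f t - (t:ℂ) * g t)
        = f (t + h) - f t - (h:ℂ) * g t := by push_cast; ring
    rwa [heq] at this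
  -- from hf: eventually ‖f t‖ ≤ ε * h / 8
  have hsm : ∀ᶠ t in atTop, ‖f t‖ ≤ ε * h / 8 := by
    have := (tendsto_zero_iff_norm_tendsto_zero.1 hf).eventually
      (eventually_le_nhds (show (0:ℝ) < ε * h / 8 by positivity))
    exact this
  have hsm2 : ∀ᶠ t in atTop, ‖f (t + h)‖ ≤ ε * h / 8 :=
    (tendsto_atTop_add_const_right atTop h tendsto_id).eventually hsm
  have hev : ∀ᶠ t in atTop, t ∈ Set.Ici a := eventually_ge_atTop a
  have key : ∀ᶠ t in atTop, ‖g t‖ < ε := by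
    filter_upwards [hsm, hsm2, hev] with t h1 h2 h3
    have t1 := taylor t h3
    have : h * ‖g t‖ ≤ ‖f (t+h)‖ + ‖f t‖ + L * h * h := by
      have : ‖(h:ℂ) * g t‖ ≤ ‖f (t + h) - f t - (h:ℂ) * g t‖ + ‖f (t+h) - f t‖ := by
        have := norm_sub_norm_le (f (t + h) - f t) ((h:ℂ) * g t)
        have h4 := norm_sub_le (f (t+h)) (f t)
        calc ‖(h:ℂ) * g t‖ ≤ ‖f (t + h) - f t‖ + ‖f (t + h) - f t - (h:ℂ) * g t‖ := by
              have := norm_le_insert' (f (t+h) - f t) ((h:ℂ)*g t)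
              -- fallback
              calc ‖(h:ℂ) * g t‖ = ‖(f (t+h) - f t) - (f (t + h) - f t - (h:ℂ) * g t)‖ := by ring_nf
                _ ≤ ‖f (t + h) - f t‖ + ‖f (t + h) - f t - (h:ℂ) * g t‖ := norm_sub_le _ _
          _ = ‖f (t + h) - f t - (h:ℂ) * g t‖ + ‖f (t+h) - f t‖ := by ring
      have hn : ‖(h:ℂ) * g t‖ = h * ‖g t‖ := by
        rw [norm_mul, Complex.norm_real, Real.norm_eq_abs, abs_of_pos hhpos]
      rw [hn] at this
      have := le_trans this (by linarith [norm_sub_le (f (t+h)) (f t), t1] :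
        ‖f (t + h) - f t - (h:ℂ) * g t‖ + ‖f (t+h) - f t‖ ≤ L*h*h + (‖f (t+h)‖ + ‖f t‖))
      linarith
    have : h * ‖g t‖ ≤ ε * h / 8 + ε * h / 8 + (ε/2) * h := by
      nlinarith [hLh, hhpos.le]
    have : ‖g t‖ ≤ ε/8 + ε/8 + ε/2 := by
      rw [← mul_le_mul_iff_right₀ hhpos]
      calc h * ‖g t‖ ≤ ε * h / 8 + ε * h / 8 + (ε/2) * h := this
        _ = h * (ε/8 + ε/8 + ε/2) := by ring
    linarith
  rw [eventually_atTop] at key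
  obtain ⟨N, hN⟩ := key
  exact ⟨N, fun n hn => by
    simpa [Real.dist_eq, abs_of_nonneg (norm_nonneg (g n))] using hN n hn⟩


lemma l2_lip_tendsto_zero {g : ℝ → ℝ} {L a : ℝ} (hL : 0 < L)
    (hg0 : ∀ t ∈ Set.Ici a, 0 ≤ g t)
    (hlip : ∀ t ∈ Set.Ici a, ∀ s ∈ Set.Ici a, |g t - g s| ≤ L * |t - s|)
    (hint : IntegrableOn (fun s => g s ^ 2) (Set.Ici a)) :
    Tendsto g atTop (nhds 0) := by
  have hint' : ∀ t : ℝ, IntegrableOn (fun s => g s ^ 2) (Set.Ioc a t) :=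
    fun t => hint.mono_set (fun x hx => le_of_lt hx.1)
  set φ : ℝ → ℝ := fun t => ∫ s in Set.Ioc a t, g s ^ 2 with hφ
  have hnn : ∀ t : ℝ, 0 ≤ᶠ[ae (volume.restrict (Set.Ioc a t))] fun s => g s ^ 2 := by
    intro t
    filter_upwards with s using sq_nonneg _
  have hnn' : 0 ≤ᶠ[ae (volume.restrict (Set.Ici a))] fun s => g s ^ 2 := by
    filter_upwards with s using sq_nonneg _
  have hmono : Monotone φ := by
    intro t₁ t₂ h12
    exact setIntegral_mono_set (hint' t₂) (hnn t₂)
      (HasSubset.Subset.eventuallyLE (Set.Ioc_subset_Ioc_right h12))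
  have hbdd : BddAbove (Set.range φ) := by
    refine ⟨∫ s in Set.Ici a, g s ^ 2, ?_⟩
    rintro x ⟨t, rfl⟩
    exact setIntegral_mono_set hint hnn'
      (HasSubset.Subset.eventuallyLE (fun x hx => le_of_lt hx.1))
  have hφlim : Tendsto φ atTop (nhds (⨆ t, φ t)) := tendsto_atTop_ciSup hmono hbdd
  -- show: ∀ ε > 0, eventually g t < ε
  rw [Metric.tendsto_nhds]
  intro ε hε
  set δ : ℝ := ε / (2 * L) with hδ
  have hδpos : 0 < δ := by positivity
  set c : ℝ := (ε / 2) ^ 2 * δ with hc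
  have hcpos : 0 < c := by positivity
  have hψ : Tendsto (fun t => φ (t + δ) - φ t) atTop (nhds 0) := by
    have h1 : Tendsto (fun t => φ (t + δ)) atTop (nhds (⨆ t, φ t)) :=
      hφlim.comp (tendsto_atTop_add_const_right atTop δ tendsto_id)
    simpa using h1.sub hφlim
  have hev : ∀ᶠ t in atTop, φ (t + δ) - φ t < c :=
    hψ.eventually (eventually_lt_nhds hcpos)
  filter_upwards [hev, eventually_ge_atTop a] with t h1 h2
  rw [Real.dist_eq, sub_zero, abs_of_nonneg (hg0 t h2)]
  by_contra hge
  push_neg at hge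
  -- lower bound on the increment
  have hsplit : φ (t + δ) = φ t + ∫ s in Set.Ioc t (t + δ), g s ^ 2 := by
    rw [hφ]
    rw [← MeasureTheory.setIntegral_union (Set.Ioc_disjoint_Ioc_of_le le_rfl)
      measurableSet_Ioc (hint' t) (hint.mono_set
        (fun x hx => le_trans h2 (le_of_lt hx.1)))]
    rw [Set.Ioc_union_Ioc_eq_Ioc h2 (by linarith)]
  have hlb : (ε/2)^2 * δ ≤ ∫ s in Set.Ioc t (t + δ), g s ^ 2 := by
    have hmeas : (volume (Set.Ioc t (t + δ))).toReal = δ := by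
      rw [Real.volume_Ioc]
      rw [ENNReal.toReal_ofReal (by linarith)]
      ring
    have := setIntegral_ge_of_const_le (c := (ε/2)^2) (s := Set.Ioc t (t + δ)) measurableSet_Ioc
      (by rw [Real.volume_Ioc]; exact ENNReal.ofReal_ne_top)
      (fun s hs => by
        have hsa : s ∈ Set.Ici a := le_trans h2 (le_of_lt hs.1)
        have hdist : |g t - g s| ≤ L * δ := by
          have := hlip t h2 s hsa
          have habs : |t - s| ≤ δ := by
            rw [abs_of_nonpos (by linarith [hs.1])]
            linarith [hs.2]
          calc |g t - g s| ≤ L * |t - s| := this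
            _ ≤ L * δ := by nlinarith
        have hLδ : L * δ = ε / 2 := by
          rw [hδ]; field_simp
        have hgs : ε / 2 ≤ g s := by
          have := abs_le.1 hdist
          rw [hLδ] at this
          linarith [this.1]
        have : (ε/2)^2 ≤ g s ^ 2 := by nlinarith
        exact this)
      (hint.mono_set (fun x hx => le_trans h2 (le_of_lt hx.1)))
    rw [measureReal_def, hmeas, smul_eq_mul] at this; linarith
  rw [hsplit] at h1
  rw [hc] at h1
  linarith

theorem kinetic_kuramoto_fourier_moments_vanish
    (K : ℝ) (hK : 0 < K)
    (f₀ : Measure (ℝ × ℝ)) [IsProbabilityMeasure f₀]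
    (Θ : ℝ → ℝ → ℝ → ℝ) (z : ℝ → ℂ)
    (hz : ∀ t, z t = ∫ p : ℝ × ℝ, Complex.exp (Complex.I * (Θ t p.1 p.2 : ℂ)) ∂f₀)
    (hinit : ∀ θ ω, Θ 0 θ ω = θ)
    (hode : ∀ (θ ω : ℝ), ∀ t ≥ (0:ℝ),
      HasDerivAt (fun s => Θ s θ ω)
        (ω - K * (Complex.exp (Complex.I * (Θ t θ ω : ℂ)) * (starRingEnd ℂ) (z t)).im) t)
    (M : ℝ) (hsupp : (Measure.map Prod.snd f₀) (Set.Icc (-M) M)ᶜ = 0)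
    (hentropy : IntegrableOn (fun s => ‖z s‖ ^ 2) (Set.Ici (0:ℝ))) :
    ∀ k : ℕ,
      Tendsto (fun t =>
          ∫ p : ℝ × ℝ, Complex.exp (Complex.I * (Θ t p.1 p.2 : ℂ)) * (p.2 : ℂ) ^ k ∂f₀)
        atTop (nhds 0) := by
  -- a.e. bound on frequencies
  have hMa : ∀ᵐ p ∂f₀, |p.2| ≤ M := by
    rw [ae_iff]
    have hset : {p : ℝ × ℝ | ¬ |p.2| ≤ M} = Prod.snd ⁻¹' (Set.Icc (-M) M)ᶜ := by
      ext p
      simp [Set.mem_Icc, abs_le, not_and_or]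
    rw [hset, ← Measure.map_apply measurable_snd measurableSet_Icc.compl]
    exact hsupp
  have hM0 : 0 ≤ M := by
    have hne : (ae f₀).NeBot := ae_neBot.2 (IsProbabilityMeasure.ne_zero f₀)
    obtain ⟨p, hp⟩ := hMa.exists
    linarith [abs_nonneg p.2]
  -- |z| ≤ 1
  have hz1 : ∀ t, ‖z t‖ ≤ 1 := by
    intro t
    rw [hz t]
    calc ‖∫ p : ℝ × ℝ, Complex.exp (Complex.I * (Θ t p.1 p.2 : ℂ)) ∂f₀‖
        ≤ 1 * (f₀ Set.univ).toReal :=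
          norm_integral_le_of_norm_le_const (ae_of_all _ fun p => le_of_eq (norm_expI _))
      _ = 1 := by simp
  -- |Im (e^{iθ} conj (z t))| ≤ ‖z t‖
  have hIm : ∀ (x : ℝ) (t : ℝ),
      |(Complex.exp (Complex.I * (x:ℂ)) * (starRingEnd ℂ) (z t)).im| ≤ ‖z t‖ := by
    intro x t
    calc |(Complex.exp (Complex.I * (x:ℂ)) * (starRingEnd ℂ) (z t)).im|
        ≤ ‖Complex.exp (Complex.I * (x:ℂ)) * (starRingEnd ℂ) (z t)‖ :=
          Complex.abs_im_le_norm _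
      _ = ‖Complex.exp (Complex.I * (x:ℂ)) * (starRingEnd ℂ) (z t)‖ :=
          rfl
      _ = ‖Complex.exp (Complex.I * (x:ℂ))‖ * ‖(starRingEnd ℂ) (z t)‖ := norm_mul _ _
      _ = ‖z t‖ := by rw [norm_expI, one_mul, RCLike.norm_conj]
  -- time Lipschitz of Θ
  have hΘt : ∀ θ ω, |ω| ≤ M → ∀ t ∈ Set.Ici (0:ℝ), ∀ s ∈ Set.Ici (0:ℝ),
      |Θ t θ ω - Θ s θ ω| ≤ (M + K) * |t - s| := by
    intro θ ω hω t ht s hs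
    have := Convex.norm_image_sub_le_of_norm_hasDerivWithin_le
      (f := fun u => Θ u θ ω)
      (f' := fun u => ω - K * (Complex.exp (Complex.I * (Θ u θ ω : ℂ)) * (starRingEnd ℂ) (z u)).im)
      (fun u hu => (hode θ ω u hu).hasDerivWithinAt)
      (C := M + K)
      (fun u hu => by
        rw [Real.norm_eq_abs]
        have h1 := hIm (Θ u θ ω) u
        have h2 := hz1 u
        have h3 : |ω - K * (Complex.exp (Complex.I * (Θ u θ ω : ℂ)) * (starRingEnd ℂ) (z u)).im|
            ≤ |ω| + |K * (Complex.exp (Complex.I * (Θ u θ ω : ℂ)) * (starRingEnd ℂ) (z u)).im| :=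
          abs_sub _ _
        rw [abs_mul, abs_of_pos hK] at h3
        nlinarith [abs_nonneg (Complex.exp (Complex.I * (Θ u θ ω : ℂ)) * (starRingEnd ℂ) (z u)).im])
      (convex_Ici 0) hs ht
    simpa [Real.norm_eq_abs] using this
  -- space Lipschitz of Θ (Grönwall)
  have hΘp : ∀ t ≥ (0:ℝ), ∀ p q : ℝ × ℝ,
      |Θ t p.1 p.2 - Θ t q.1 q.2| ≤ (|p.1 - q.1| + |p.2 - q.2| / K) * Real.exp (K * t) := by
    intro t ht p q
    have main := norm_le_gronwallBound_of_norm_deriv_right_le (a := 0) (b := t)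
      (f := fun s => Θ s p.1 p.2 - Θ s q.1 q.2)
      (f' := fun s =>
        (p.2 - K * (Complex.exp (Complex.I * (Θ s p.1 p.2 : ℂ)) * (starRingEnd ℂ) (z s)).im)
        - (q.2 - K * (Complex.exp (Complex.I * (Θ s q.1 q.2 : ℂ)) * (starRingEnd ℂ) (z s)).im))
      (δ := |p.1 - q.1|) (K := K) (ε := |p.2 - q.2|)
      (fun s hs => (((hode p.1 p.2 s hs.1).sub (hode q.1 q.2 s hs.1)).continuousAt).continuousWithinAt)
      (fun s hs => ((hode p.1 p.2 s hs.1).sub (hode q.1 q.2 s hs.1)).hasDerivWithinAt)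
      (by show ‖Θ 0 p.1 p.2 - Θ 0 q.1 q.2‖ ≤ |p.1 - q.1|
          rw [hinit, hinit, Real.norm_eq_abs])
      (fun s hs => by
        rw [Real.norm_eq_abs, Real.norm_eq_abs]
        have key : |(Complex.exp (Complex.I * (Θ s p.1 p.2 : ℂ)) * (starRingEnd ℂ) (z s)).im
            - (Complex.exp (Complex.I * (Θ s q.1 q.2 : ℂ)) * (starRingEnd ℂ) (z s)).im|
            ≤ |Θ s p.1 p.2 - Θ s q.1 q.2| := by
          have heq : (Complex.exp (Complex.I * (Θ s p.1 p.2 : ℂ)) * (starRingEnd ℂ) (z s)).im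
              - (Complex.exp (Complex.I * (Θ s q.1 q.2 : ℂ)) * (starRingEnd ℂ) (z s)).im
              = ((Complex.exp (Complex.I * (Θ s p.1 p.2 : ℂ))
                  - Complex.exp (Complex.I * (Θ s q.1 q.2 : ℂ))) * (starRingEnd ℂ) (z s)).im := by
            rw [sub_mul, Complex.sub_im]
          rw [heq]
          calc |((Complex.exp (Complex.I * (Θ s p.1 p.2 : ℂ))
                  - Complex.exp (Complex.I * (Θ s q.1 q.2 : ℂ))) * (starRingEnd ℂ) (z s)).im|
              ≤ ‖(Complex.exp (Complex.I * (Θ s p.1 p.2 : ℂ))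
                  - Complex.exp (Complex.I * (Θ s q.1 q.2 : ℂ))) * (starRingEnd ℂ) (z s)‖ := by
                exact Complex.abs_im_le_norm _
            _ = ‖Complex.exp (Complex.I * (Θ s p.1 p.2 : ℂ))
                  - Complex.exp (Complex.I * (Θ s q.1 q.2 : ℂ))‖ * ‖(starRingEnd ℂ) (z s)‖ :=
                norm_mul _ _
            _ ≤ |Θ s p.1 p.2 - Θ s q.1 q.2| * 1 := by
                apply mul_le_mul (expI_lip _ _) (by rw [RCLike.norm_conj]; exact hz1 s)
                  (norm_nonneg _) (abs_nonneg _)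
            _ = |Θ s p.1 p.2 - Θ s q.1 q.2| := mul_one _
        have h3 : |(p.2 - K * (Complex.exp (Complex.I * (Θ s p.1 p.2 : ℂ)) * (starRingEnd ℂ) (z s)).im)
            - (q.2 - K * (Complex.exp (Complex.I * (Θ s q.1 q.2 : ℂ)) * (starRingEnd ℂ) (z s)).im)|
            ≤ |p.2 - q.2| + K * |(Complex.exp (Complex.I * (Θ s p.1 p.2 : ℂ)) * (starRingEnd ℂ) (z s)).im
            - (Complex.exp (Complex.I * (Θ s q.1 q.2 : ℂ)) * (starRingEnd ℂ) (z s)).im| := by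
          have : (p.2 - K * (Complex.exp (Complex.I * (Θ s p.1 p.2 : ℂ)) * (starRingEnd ℂ) (z s)).im)
              - (q.2 - K * (Complex.exp (Complex.I * (Θ s q.1 q.2 : ℂ)) * (starRingEnd ℂ) (z s)).im)
              = (p.2 - q.2) - K * ((Complex.exp (Complex.I * (Θ s p.1 p.2 : ℂ)) * (starRingEnd ℂ) (z s)).im
              - (Complex.exp (Complex.I * (Θ s q.1 q.2 : ℂ)) * (starRingEnd ℂ) (z s)).im) := by ring
          rw [this]
          calc _ ≤ |p.2 - q.2| + |K * _| := abs_sub _ _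
            _ = _ := by rw [abs_mul, abs_of_pos hK]
        calc _ ≤ |p.2 - q.2| + K * |Θ s p.1 p.2 - Θ s q.1 q.2| := by
              refine le_trans h3 ?_
              have := mul_le_mul_of_nonneg_left key hK.le
              linarith
          _ = K * |Θ s p.1 p.2 - Θ s q.1 q.2| + |p.2 - q.2| := by ring)
      t (Set.mem_Icc.2 ⟨ht, le_refl t⟩)
    rw [Real.norm_eq_abs] at main
    rw [gronwallBound_of_K_ne_0 (ne_of_gt hK)] at main
    simp only [sub_zero] at main
    have h1 : 0 < Real.exp (K * t) := Real.exp_pos _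
    have h2 : (0:ℝ) ≤ |p.2 - q.2| / K := by positivity
    nlinarith [abs_nonneg (p.1 - q.1), abs_nonneg (p.2 - q.2)]
  -- continuity in p
  have hcont : ∀ t ≥ (0:ℝ), Continuous (fun p : ℝ × ℝ => Θ t p.1 p.2) := by
    intro t ht
    apply LipschitzWith.continuous
      (K := Real.toNNReal ((1 + 1/K) * Real.exp (K * t)))
    apply LipschitzWith.of_dist_le_mul
    intro p q
    rw [Real.dist_eq]
    have hb := hΘp t ht p q
    have hd1 : |p.1 - q.1| ≤ dist p q := by
      rw [Prod.dist_eq, ← Real.dist_eq]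
      exact le_max_left _ _
    have hd2 : |p.2 - q.2| ≤ dist p q := by
      rw [Prod.dist_eq, ← Real.dist_eq]
      exact le_max_right _ _
    have hcoe : (Real.toNNReal ((1 + 1/K) * Real.exp (K * t)) : ℝ)
        = (1 + 1/K) * Real.exp (K * t) := by
      rw [Real.coe_toNNReal]
      positivity
    rw [hcoe]
    have h1 : 0 < Real.exp (K * t) := Real.exp_pos _
    have h3 : |p.2 - q.2| / K ≤ dist p q / K := by gcongr
    calc |Θ t p.1 p.2 - Θ t q.1 q.2| ≤ (|p.1 - q.1| + |p.2 - q.2| / K) * Real.exp (K * t) := hb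
      _ ≤ (dist p q + dist p q / K) * Real.exp (K * t) := by
          apply mul_le_mul_of_nonneg_right _ h1.le
          linarith
      _ = (1 + 1/K) * Real.exp (K * t) * dist p q := by ring
  -- integrability of the moment integrand
  have hInte : ∀ (k : ℕ), ∀ t ≥ (0:ℝ),
      Integrable (fun p : ℝ × ℝ => Complex.exp (Complex.I * (Θ t p.1 p.2 : ℂ)) * (p.2:ℂ)^k) f₀ := by
    intro k t ht
    have hc : Continuous (fun p : ℝ × ℝ =>
        Complex.exp (Complex.I * (Θ t p.1 p.2 : ℂ)) * (p.2:ℂ)^k) := by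
      apply Continuous.mul
      · exact Complex.continuous_exp.comp
          (continuous_const.mul (Complex.continuous_ofReal.comp (hcont t ht)))
      · exact (Complex.continuous_ofReal.comp continuous_snd).pow k
    apply Integrable.mono' (integrable_const (M^k)) hc.aestronglyMeasurable
    filter_upwards [hMa] with p hp
    rw [norm_mul, norm_expI, one_mul, norm_pow, Complex.norm_real, Real.norm_eq_abs]
    exact pow_le_pow_left₀ (abs_nonneg _) hp k
  -- the derivative integrand
  set Fd : ℕ → ℝ → ℝ × ℝ → ℂ := fun k t p =>
    Complex.exp (Complex.I * (Θ t p.1 p.2 : ℂ)) *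
      (Complex.I * ((p.2 - K * (Complex.exp (Complex.I * (Θ t p.1 p.2 : ℂ)) *
        (starRingEnd ℂ) (z t)).im : ℝ) : ℂ)) * (p.2:ℂ)^k with hFd_def
  have hF'norm : ∀ k t (p : ℝ × ℝ), ‖Fd k t p‖ =
      |p.2 - K * (Complex.exp (Complex.I * (Θ t p.1 p.2 : ℂ)) * (starRingEnd ℂ) (z t)).im|
        * |p.2|^k := by
    intro k t p
    simp only [hFd_def]
    rw [norm_mul, norm_mul, norm_mul, norm_expI, Complex.norm_I, Complex.norm_real,
      norm_pow, Complex.norm_real, Real.norm_eq_abs, Real.norm_eq_abs]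
    ring
  have hdbound : ∀ t (p : ℝ × ℝ),
      |p.2 - K * (Complex.exp (Complex.I * (Θ t p.1 p.2 : ℂ)) * (starRingEnd ℂ) (z t)).im|
        ≤ |p.2| + K := by
    intro t p
    have h1 := hIm (Θ t p.1 p.2) t
    have h2 := hz1 t
    calc _ ≤ |p.2| + |K * (Complex.exp (Complex.I * (Θ t p.1 p.2 : ℂ)) *
          (starRingEnd ℂ) (z t)).im| := abs_sub _ _
      _ ≤ |p.2| + K := by
          rw [abs_mul, abs_of_pos hK]
          nlinarith
  have hF'meas : ∀ k, ∀ t ≥ (0:ℝ), AEStronglyMeasurable (Fd k t) f₀ := by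
    intro k t ht
    have c1 : Continuous (fun p : ℝ × ℝ => Complex.exp (Complex.I * (Θ t p.1 p.2 : ℂ))) :=
      Complex.continuous_exp.comp
        (continuous_const.mul (Complex.continuous_ofReal.comp (hcont t ht)))
    have cd : Continuous (fun p : ℝ × ℝ =>
        p.2 - K * (Complex.exp (Complex.I * (Θ t p.1 p.2 : ℂ)) * (starRingEnd ℂ) (z t)).im) :=
      continuous_snd.sub (continuous_const.mul (Complex.continuous_im.comp
        (c1.mul continuous_const)))
    have hc : Continuous (Fd k t) := by
      simp only [hFd_def]
      exact (c1.mul (continuous_const.mul (Complex.continuous_ofReal.comp cd))).mul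
        ((Complex.continuous_ofReal.comp continuous_snd).pow k)
    exact hc.aestronglyMeasurable
  have hF'int : ∀ k, ∀ t ≥ (0:ℝ), Integrable (Fd k t) f₀ := by
    intro k t ht
    apply Integrable.mono' (integrable_const ((M + K) * M^k)) (hF'meas k t ht)
    filter_upwards [hMa] with p hp
    rw [hF'norm]
    apply mul_le_mul (le_trans (hdbound t p) (by linarith))
      (pow_le_pow_left₀ (abs_nonneg _) hp k) (by positivity) (by linarith)
  have hGbound : ∀ k t, ‖∫ p, Fd k t p ∂f₀‖ ≤ (M + K) * M^k := by
    intro k t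
    calc ‖∫ p, Fd k t p ∂f₀‖ ≤ ((M + K) * M^k) * (f₀ Set.univ).toReal := by
          apply norm_integral_le_of_norm_le_const
          filter_upwards [hMa] with p hp
          rw [hF'norm]
          apply mul_le_mul (le_trans (hdbound t p) (by linarith))
            (pow_le_pow_left₀ (abs_nonneg _) hp k) (by positivity) (by linarith)
      _ = (M + K) * M^k := by simp
  -- derivative of the moments
  have hDer : ∀ k (t : ℝ), 0 < t →
      HasDerivAt (fun u => ∫ p : ℝ × ℝ,
        Complex.exp (Complex.I * (Θ u p.1 p.2 : ℂ)) * (p.2:ℂ)^k ∂f₀)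
        (∫ p, Fd k t p ∂f₀) t := by
    intro k t ht
    refine (hasDerivAt_integral_of_dominated_loc_of_deriv_le (s := Metric.ball t t)
      (bound := fun p : ℝ × ℝ => (|p.2| + K) * |p.2|^k)
      (F' := fun u p => Fd k u p) (Metric.ball_mem_nhds t ht) ?_ (hInte k t ht.le) ?_ ?_ ?_ ?_).2
    · filter_upwards [Ioi_mem_nhds ht] with u hu
      exact (hInte k u (le_of_lt hu)).aestronglyMeasurable
    · exact hF'meas k t ht.le
    · refine ae_of_all _ fun p u hu => ?_
      rw [hF'norm]
      exact mul_le_mul_of_nonneg_right (hdbound u p) (by positivity)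
    · apply Integrable.mono' (integrable_const ((M + K) * M^k))
      · exact ((continuous_snd.abs.add continuous_const).mul
          (continuous_snd.abs.pow k)).aestronglyMeasurable
      · filter_upwards [hMa] with p hp
        rw [Real.norm_eq_abs, abs_of_nonneg (by positivity)]
        apply mul_le_mul (by linarith) (pow_le_pow_left₀ (abs_nonneg _) hp k)
          (by positivity) (by linarith)
    · refine ae_of_all _ fun p u hu => ?_
      rw [Metric.mem_ball, Real.dist_eq] at hu
      have hu0 : 0 < u := by
        rcases abs_lt.1 hu with ⟨h1, _⟩
        linarith
      have h1 := hode p.1 p.2 u hu0.le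
      have h2 := (((h1.ofReal_comp).const_mul Complex.I).cexp).mul_const ((p.2:ℂ)^k)
      simpa only [hFd_def] using h2
  -- z as zeroth moment
  have hzF : ∀ t, z t = ∫ p : ℝ × ℝ,
      Complex.exp (Complex.I * (Θ t p.1 p.2 : ℂ)) * (p.2:ℂ)^0 ∂f₀ := by
    intro t
    rw [hz t]
    simp
  -- Lipschitz bound for z on [1, ∞)
  have hzlip : ∀ t ∈ Set.Ici (1:ℝ), ∀ s ∈ Set.Ici (1:ℝ),
      ‖z t - z s‖ ≤ (M + K) * |t - s| := by
    intro t ht s hs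
    have key := Convex.norm_image_sub_le_of_norm_hasDerivWithin_le
      (f := fun u => ∫ p : ℝ × ℝ,
        Complex.exp (Complex.I * (Θ u p.1 p.2 : ℂ)) * (p.2:ℂ)^0 ∂f₀)
      (f' := fun u => ∫ p, Fd 0 u p ∂f₀)
      (fun u hu => (hDer 0 u (lt_of_lt_of_le one_pos hu)).hasDerivWithinAt)
      (C := M + K)
      (fun u hu => by simpa using hGbound 0 u)
      (convex_Ici 1) hs ht
    rw [hzF t, hzF s, ← Real.norm_eq_abs]
    exact key
  -- R → 0
  have hR0 : Tendsto (fun t => ‖z t‖) atTop (nhds 0) := by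
    apply l2_lip_tendsto_zero (L := M + K) (a := 1) (by linarith)
    · exact fun t _ => norm_nonneg _
    · exact fun t ht s hs => le_trans (abs_norm_sub_norm_le _ _) (hzlip t ht s hs)
    · have hfun : (fun s => ‖z s‖^2) = fun s => ‖z s‖^2 := by
        funext s
        rfl
      rw [hfun]
      exact hentropy.mono_set (fun x hx => Set.mem_Ici.2 (le_trans zero_le_one hx))
  -- splitting of the derivative
  have hsplit : ∀ k : ℕ, ∀ t ≥ (0:ℝ),
      ‖(∫ p, Fd k t p ∂f₀) - Complex.I * ∫ p : ℝ × ℝ,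
        Complex.exp (Complex.I * (Θ t p.1 p.2 : ℂ)) * (p.2:ℂ)^(k+1) ∂f₀‖
        ≤ K * M^k * ‖z t‖ := by
    intro k t ht
    have hIk : Integrable (fun p : ℝ × ℝ =>
        Complex.I * (Complex.exp (Complex.I * (Θ t p.1 p.2 : ℂ)) * (p.2:ℂ)^(k+1))) f₀ :=
      (hInte (k+1) t ht).const_mul _
    rw [← integral_const_mul, ← integral_sub (hF'int k t ht) hIk]
    calc ‖∫ p, (Fd k t p - Complex.I * (Complex.exp (Complex.I * (Θ t p.1 p.2 : ℂ))
          * (p.2:ℂ)^(k+1))) ∂f₀‖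
        ≤ (K * M^k * ‖z t‖) * (f₀ Set.univ).toReal := by
          apply norm_integral_le_of_norm_le_const
          filter_upwards [hMa] with p hp
          have heq : Fd k t p - Complex.I * (Complex.exp (Complex.I * (Θ t p.1 p.2 : ℂ))
              * (p.2:ℂ)^(k+1))
              = ((-(K * (Complex.exp (Complex.I * (Θ t p.1 p.2 : ℂ)) *
                  (starRingEnd ℂ) (z t)).im) : ℝ) : ℂ) *
                (Complex.I * Complex.exp (Complex.I * (Θ t p.1 p.2 : ℂ)) * (p.2:ℂ)^k) := by
            simp only [hFd_def]
            push_cast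
            ring
          rw [heq, norm_mul, norm_mul, norm_mul, Complex.norm_real, Complex.norm_I,
            norm_expI, norm_pow, Complex.norm_real, Real.norm_eq_abs, Real.norm_eq_abs]
          have h1 : |(-(K * (Complex.exp (Complex.I * (Θ t p.1 p.2 : ℂ)) *
              (starRingEnd ℂ) (z t)).im))| ≤ K * ‖z t‖ := by
            rw [abs_neg, abs_mul, abs_of_pos hK]
            exact mul_le_mul_of_nonneg_left (hIm _ _) hK.le
          have h2 : |p.2|^k ≤ M^k := pow_le_pow_left₀ (abs_nonneg _) hp k
          calc _ ≤ (K * ‖z t‖) * (1 * 1 * M^k) := by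
                apply mul_le_mul h1 _ (by positivity) (by positivity)
                simpa using h2
            _ = K * M^k * ‖z t‖ := by ring
      _ = K * M^k * ‖z t‖ := by simp
  -- Lipschitz bound for the derivative of the moments
  have hGlip : ∀ k : ℕ, ∀ t ∈ Set.Ici (1:ℝ), ∀ s ∈ Set.Ici (1:ℝ),
      ‖(∫ p, Fd k t p ∂f₀) - ∫ p, Fd k s p ∂f₀‖
        ≤ (M^k * ((M+K)*(M+K) + 2*K*(M+K))) * |t - s| := by
    intro k t ht s hs
    have ht0 : (0:ℝ) ≤ t := le_trans zero_le_one ht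
    have hs0 : (0:ℝ) ≤ s := le_trans zero_le_one hs
    rw [← integral_sub (hF'int k t ht0) (hF'int k s hs0)]
    calc ‖∫ p, (Fd k t p - Fd k s p) ∂f₀‖
        ≤ ((M^k * ((M+K)*(M+K) + 2*K*(M+K))) * |t - s|) * (f₀ Set.univ).toReal := by
          apply norm_integral_le_of_norm_le_const
          filter_upwards [hMa] with p hp
          set et := Complex.exp (Complex.I * (Θ t p.1 p.2 : ℂ)) with het
          set es := Complex.exp (Complex.I * (Θ s p.1 p.2 : ℂ)) with hes
          set imt := (et * (starRingEnd ℂ) (z t)).im with himt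
          set ims := (es * (starRingEnd ℂ) (z s)).im with hims
          set dt := p.2 - K * imt with hdt
          set ds := p.2 - K * ims with hds
          have he_lip : ‖et - es‖ ≤ (M + K) * |t - s| :=
            le_trans (expI_lip _ _) (hΘt p.1 p.2 hp t ht0 s hs0)
          have hdt_b : |dt| ≤ M + K := le_trans (hdbound t p) (by linarith)
          have him_diff : |imt - ims| ≤ 2 * (M + K) * |t - s| := by
            have heq : imt - ims = ((et - es) * (starRingEnd ℂ) (z t)
                + es * ((starRingEnd ℂ) (z t) - (starRingEnd ℂ) (z s))).im := by
              rw [himt, hims]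
              rw [sub_mul, mul_sub, Complex.add_im, Complex.sub_im, Complex.sub_im]
              ring
            rw [heq]
            calc |((et - es) * (starRingEnd ℂ) (z t)
                + es * ((starRingEnd ℂ) (z t) - (starRingEnd ℂ) (z s))).im|
                ≤ ‖(et - es) * (starRingEnd ℂ) (z t)
                  + es * ((starRingEnd ℂ) (z t) - (starRingEnd ℂ) (z s))‖ := by
                  exact Complex.abs_im_le_norm _
              _ ≤ ‖(et - es) * (starRingEnd ℂ) (z t)‖
                  + ‖es * ((starRingEnd ℂ) (z t) - (starRingEnd ℂ) (z s))‖ := norm_add_le _ _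
              _ ≤ (M + K) * |t - s| * 1 + 1 * ((M + K) * |t - s|) := by
                  apply add_le_add
                  · rw [norm_mul, RCLike.norm_conj]
                    exact mul_le_mul he_lip (hz1 t) (norm_nonneg _)
                      (by positivity)
                  · rw [norm_mul, hes, norm_expI]
                    apply mul_le_mul le_rfl _ (norm_nonneg _) zero_le_one
                    rw [← map_sub, RCLike.norm_conj]
                    exact hzlip t ht s hs
              _ = 2 * (M + K) * |t - s| := by ring
          have hd_diff : |dt - ds| ≤ 2 * K * (M + K) * |t - s| := by
            have : dt - ds = -(K * (imt - ims)) := by rw [hdt, hds]; ring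
            rw [this, abs_neg, abs_mul, abs_of_pos hK]
            calc K * |imt - ims| ≤ K * (2 * (M + K) * |t - s|) :=
                  mul_le_mul_of_nonneg_left him_diff hK.le
              _ = 2 * K * (M + K) * |t - s| := by ring
          have hmain : ‖et * (Complex.I * (dt:ℂ)) - es * (Complex.I * (ds:ℂ))‖
              ≤ ((M+K)*(M+K) + 2*K*(M+K)) * |t - s| := by
            have heq : et * (Complex.I * (dt:ℂ)) - es * (Complex.I * (ds:ℂ))
                = (et - es) * (Complex.I * (dt:ℂ)) + es * (Complex.I * ((dt:ℂ) - (ds:ℂ))) := by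
              ring
            rw [heq]
            calc _ ≤ ‖(et - es) * (Complex.I * (dt:ℂ))‖
                  + ‖es * (Complex.I * ((dt:ℂ) - (ds:ℂ)))‖ := norm_add_le _ _
              _ ≤ (M + K) * |t - s| * (M + K) + 1 * (2 * K * (M + K) * |t - s|) := by
                  apply add_le_add
                  · rw [norm_mul, norm_mul, Complex.norm_I, one_mul, Complex.norm_real,
                      Real.norm_eq_abs]
                    exact mul_le_mul he_lip hdt_b (abs_nonneg _) (by positivity)
                  · rw [norm_mul, hes, norm_expI, norm_mul, Complex.norm_I, one_mul]
                    apply mul_le_mul le_rfl _ (norm_nonneg _) zero_le_one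
                    rw [← Complex.ofReal_sub, Complex.norm_real, Real.norm_eq_abs]
                    exact hd_diff
              _ = ((M+K)*(M+K) + 2*K*(M+K)) * |t - s| := by ring
          have heqF : Fd k t p - Fd k s p
              = (et * (Complex.I * (dt:ℂ)) - es * (Complex.I * (ds:ℂ))) * (p.2:ℂ)^k := by
            simp only [hFd_def, het, hes, himt, hims, hdt, hds]
            ring
          rw [heqF, norm_mul, norm_pow, Complex.norm_real, Real.norm_eq_abs]
          calc _ ≤ (((M+K)*(M+K) + 2*K*(M+K)) * |t - s|) * M^k := by
                apply mul_le_mul hmain (pow_le_pow_left₀ (abs_nonneg _) hp k)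
                  (by positivity) (by positivity)
            _ = (M^k * ((M+K)*(M+K) + 2*K*(M+K))) * |t - s| := by ring
      _ = (M^k * ((M+K)*(M+K) + 2*K*(M+K))) * |t - s| := by simp
  -- the induction
  intro k
  induction k with
  | zero =>
    rw [tendsto_zero_iff_norm_tendsto_zero]
    have hfun : (fun t => ‖∫ p : ℝ × ℝ,
        Complex.exp (Complex.I * (Θ t p.1 p.2 : ℂ)) * (p.2:ℂ)^(0:ℕ) ∂f₀‖)
        = fun t => ‖z t‖ := funext fun t => by rw [← hzF]
    exact hfun ▸ hR0
  | succ k ih =>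
    have hG0 : Tendsto (fun t => ∫ p, Fd k t p ∂f₀) atTop (nhds 0) :=
      barbalat (L := M^k * ((M+K)*(M+K) + 2*K*(M+K))) (a := 1) (by positivity)
        (fun t ht => hDer k t (lt_of_lt_of_le one_pos ht))
        (hGlip k)
        ih
    have hrem : Tendsto (fun t => (∫ p, Fd k t p ∂f₀) - Complex.I * ∫ p : ℝ × ℝ,
        Complex.exp (Complex.I * (Θ t p.1 p.2 : ℂ)) * (p.2:ℂ)^(k+1) ∂f₀) atTop (nhds 0) := by
      apply squeeze_zero_norm' (a := fun t => K * M^k * ‖z t‖)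
      · filter_upwards [eventually_ge_atTop (0:ℝ)] with t ht using hsplit k t ht
      · have := hR0.const_mul (K * M^k)
        simpa using this
    have hIF : Tendsto (fun t => Complex.I * ∫ p : ℝ × ℝ,
        Complex.exp (Complex.I * (Θ t p.1 p.2 : ℂ)) * (p.2:ℂ)^(k+1) ∂f₀) atTop (nhds 0) := by
      have := hG0.sub hrem
      simpa using this
    have h2 := hIF.const_mul (-Complex.I)
    have heq : (fun t => -Complex.I * (Complex.I * ∫ p : ℝ × ℝ,
        Complex.exp (Complex.I * (Θ t p.1 p.2 : ℂ)) * (p.2:ℂ)^(k+1) ∂f₀))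
        = fun t => ∫ p : ℝ × ℝ,
          Complex.exp (Complex.I * (Θ t p.1 p.2 : ℂ)) * (p.2:ℂ)^(k+1) ∂f₀ := by
      funext t
      rw [← mul_assoc]
      simp [Complex.I_mul_I]
    rw [heq] at h2
    simpa using h2
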